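/- GAP sphere safeness: let u* ∈ Δ be the maximizer of D over Δ. Then for every x ∈ ℝ^n and every u ∈ Δ, one has ‖u* − u‖₂ ≤ √(2·gap(x,u)). -/
import Mathlib


/-- Euclidean norm of a vector in ℝ^m. -/
noncomputable def norm2 {m : ℕ} (v : Fin m → ℝ) : ℝ := Real.sqrt (∑ i, v i ^ 2)

/-- ℓ1 norm of a vector in ℝ^n. -/
def norm1 {n : ℕ} (x : Fin n → ℝ) : ℝ := ∑ i, |x i|

/-- Canonical inner product on ℝ^m. -/
def dot {m : ℕ} (a u : Fin m → ℝ) : ℝ := ∑ i, a i * u i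

/-- Lasso primal objective P(x) = (1/2)‖y − Ax‖₂² + λ‖x‖₁. -/
noncomputable def Pobj {m n : ℕ} (A : Matrix (Fin m) (Fin n) ℝ) (y : Fin m → ℝ)
    (lam : ℝ) (x : Fin n → ℝ) : ℝ :=
  (1 / 2) * norm2 (y - A.mulVec x) ^ 2 + lam * norm1 x

/-- Lasso dual objective D(u) = (1/2)‖y‖₂² − (1/2)‖y − u‖₂². -/
noncomputable def Dobj {m : ℕ} (y u : Fin m → ℝ) : ℝ :=
  (1 / 2) * norm2 y ^ 2 - (1 / 2) * norm2 (y - u) ^ 2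

/-- Dual feasibility: u ∈ Δ iff |⟨a_i, u⟩| ≤ λ for every column a_i of A. -/
def feas {m n : ℕ} (A : Matrix (Fin m) (Fin n) ℝ) (lam : ℝ) (u : Fin m → ℝ) : Prop :=
  ∀ i : Fin n, |dot (fun j => A j i) u| ≤ lam

lemma sum_sq_nonneg' {m : ℕ} (v : Fin m → ℝ) : 0 ≤ ∑ i, v i ^ 2 :=
  Finset.sum_nonneg fun _ _ => sq_nonneg _

lemma norm2_sq' {m : ℕ} (v : Fin m → ℝ) : norm2 v ^ 2 = ∑ i, v i ^ 2 :=
  Real.sq_sqrt (sum_sq_nonneg' v)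

lemma sum_expand {m : ℕ} (a b : Fin m → ℝ) (t : ℝ) :
    ∑ j, (a j - t * b j) ^ 2
      = ∑ j, a j ^ 2 - 2 * t * ∑ j, a j * b j + t ^ 2 * ∑ j, b j ^ 2 := by
  rw [Finset.mul_sum, Finset.mul_sum, ← Finset.sum_sub_distrib, ← Finset.sum_add_distrib]
  exact Finset.sum_congr rfl fun j _ => by ring

lemma Dobj_eq {m : ℕ} (y v : Fin m → ℝ) :
    Dobj y v = (1/2) * ∑ j, y j ^ 2 - (1/2) * ∑ j, (y j - v j) ^ 2 := by
  rw [Dobj, norm2_sq', norm2_sq']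
  simp [Pi.sub_apply]

/-- GAP sphere safeness: the dual maximizer u* satisfies
‖u* − u‖₂ ≤ √(2·gap(x,u)) for every x ∈ ℝ^n and u ∈ Δ. -/
theorem gap_sphere_safe (m n : ℕ) (hm : 0 < m) (hn : 0 < n)
    (A : Matrix (Fin m) (Fin n) ℝ) (y : Fin m → ℝ) (lam : ℝ) (hlam : 0 < lam)
    (ustar : Fin m → ℝ) (hfeas : feas A lam ustar)
    (hmax : ∀ u : Fin m → ℝ, feas A lam u → Dobj y u ≤ Dobj y ustar) :
    ∀ (x : Fin n → ℝ) (u : Fin m → ℝ), feas A lam u →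
      norm2 (ustar - u) ≤ Real.sqrt (2 * (Pobj A y lam x - Dobj y u)) := by
  intro x u hu
  set d : Fin m → ℝ := fun j => u j - ustar j with hd
  set K : ℝ := ∑ j, d j ^ 2 with hKdef
  set c : ℝ := ∑ j, (y j - ustar j) * d j with hc
  have hK : (0:ℝ) ≤ K := sum_sq_nonneg' d
  -- first-order condition: 2c ≤ t K for all t ∈ (0,1]
  have key : ∀ t : ℝ, 0 < t → t ≤ 1 → 2 * c ≤ t * K := by
    intro t ht ht1
    have hfe : feas A lam (fun j => ustar j + t * d j) := by
      intro i
      have hdot : dot (fun j => A j i) (fun j => ustar j + t * d j)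
          = (1 - t) * dot (fun j => A j i) ustar + t * dot (fun j => A j i) u := by
        simp only [dot, Finset.mul_sum, ← Finset.sum_add_distrib]
        exact Finset.sum_congr rfl fun j _ => by simp only [hd]; ring
      rw [hdot]
      calc |(1 - t) * dot (fun j => A j i) ustar + t * dot (fun j => A j i) u|
          ≤ |(1 - t) * dot (fun j => A j i) ustar| + |t * dot (fun j => A j i) u| :=
            abs_add_le _ _
        _ = (1 - t) * |dot (fun j => A j i) ustar| + t * |dot (fun j => A j i) u| := by
            rw [abs_mul, abs_mul, abs_of_nonneg (by linarith : (0:ℝ) ≤ 1 - t),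
              abs_of_nonneg ht.le]
        _ ≤ (1 - t) * lam + t * lam := by
            have h1 := mul_le_mul_of_nonneg_left (hfeas i)
              (show (0:ℝ) ≤ 1 - t by linarith)
            have h2 := mul_le_mul_of_nonneg_left (hu i) ht.le
            linarith
        _ = lam := by ring
    have hDle := hmax _ hfe
    have hSt : ∑ j, (y j - (ustar j + t * d j)) ^ 2
        = ∑ j, (y j - ustar j) ^ 2 - 2 * t * c + t ^ 2 * K := by
      have h2 : ∑ j, (y j - (ustar j + t * d j)) ^ 2
          = ∑ j, ((y j - ustar j) - t * d j) ^ 2 :=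
        Finset.sum_congr rfl fun j _ => by ring
      rw [h2, sum_expand (fun j => y j - ustar j) d t, ← hc, ← hKdef]
    rw [Dobj_eq, Dobj_eq, hSt] at hDle
    have h2tc : 2 * t * c ≤ t ^ 2 * K := by linarith
    nlinarith [h2tc]
  have hcle : c ≤ 0 := by
    by_contra hpos
    push_neg at hpos
    rcases eq_or_lt_of_le hK with h0 | h0
    · have := key 1 one_pos le_rfl
      rw [← h0] at this
      linarith
    · have ht : 0 < min 1 (c / K) := lt_min one_pos (div_pos hpos h0)
      have h1 := key _ ht (min_le_left _ _)
      have h2 : min 1 (c / K) * K ≤ (c / K) * K :=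
        mul_le_mul_of_nonneg_right (min_le_right _ _) h0.le
      rw [div_mul_cancel₀ _ h0.ne'] at h2
      linarith
  -- strong concavity bound: K ≤ 2 (D* - D(u))
  have hSu : ∑ j, (y j - u j) ^ 2 = ∑ j, (y j - ustar j) ^ 2 - 2 * c + K := by
    have h2 : ∑ j, (y j - u j) ^ 2 = ∑ j, ((y j - ustar j) - 1 * d j) ^ 2 :=
      Finset.sum_congr rfl fun j _ => by simp only [hd]; ring
    rw [h2, sum_expand (fun j => y j - ustar j) d 1, ← hc, ← hKdef]
    ring
  have hsc : K ≤ 2 * (Dobj y ustar - Dobj y u) := by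
    rw [Dobj_eq, Dobj_eq, hSu]; linarith
  -- weak duality: Dobj y ustar ≤ Pobj A y lam x
  have hwd : Dobj y ustar ≤ Pobj A y lam x := by
    set r : Fin m → ℝ := fun j => y j - A.mulVec x j with hr
    have hAxu : ∑ j, A.mulVec x j * ustar j = ∑ i, x i * dot (fun j => A j i) ustar := by
      simp only [Matrix.mulVec, dotProduct, dot, Finset.sum_mul]
      rw [Finset.sum_comm]
      exact Finset.sum_congr rfl fun i _ => by
        rw [Finset.mul_sum]; exact Finset.sum_congr rfl fun j _ => by ring
    have hbnd : ∑ i, x i * dot (fun j => A j i) ustar ≤ lam * norm1 x := by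
      have h1 : ∑ i, x i * dot (fun j => A j i) ustar ≤ ∑ i, |x i| * lam := by
        refine Finset.sum_le_sum fun i _ => ?_
        calc x i * dot (fun j => A j i) ustar
            ≤ |x i * dot (fun j => A j i) ustar| := le_abs_self _
          _ = |x i| * |dot (fun j => A j i) ustar| := abs_mul _ _
          _ ≤ |x i| * lam := mul_le_mul_of_nonneg_left (hfeas i) (abs_nonneg _)
      rw [norm1, Finset.mul_sum]
      calc ∑ i, x i * dot (fun j => A j i) ustar ≤ ∑ i, |x i| * lam := h1
        _ = ∑ i, lam * |x i| := Finset.sum_congr rfl fun i _ => mul_comm _ _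
    have hP : Pobj A y lam x = (1/2) * ∑ j, r j ^ 2 + lam * norm1 x := by
      rw [Pobj, norm2_sq']
      simp only [hr, Pi.sub_apply]
    have hru : ∑ j, r j * ustar j
        = ∑ j, y j * ustar j - ∑ j, A.mulVec x j * ustar j := by
      rw [← Finset.sum_sub_distrib]
      exact Finset.sum_congr rfl fun j _ => by simp only [hr]; ring
    have hys : ∑ j, (y j - ustar j) ^ 2
        = ∑ j, y j ^ 2 - 2 * ∑ j, y j * ustar j + ∑ j, ustar j ^ 2 := by
      have h := sum_expand y ustar 1
      have h2 : ∑ j, (y j - ustar j) ^ 2 = ∑ j, (y j - 1 * ustar j) ^ 2 :=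
        Finset.sum_congr rfl fun j _ => by ring
      rw [h2, h]; ring
    have hrs : (0:ℝ) ≤ ∑ j, (r j - ustar j) ^ 2 := sum_sq_nonneg' _
    have hrse : ∑ j, (r j - ustar j) ^ 2
        = ∑ j, r j ^ 2 - 2 * ∑ j, r j * ustar j + ∑ j, ustar j ^ 2 := by
      have h := sum_expand r ustar 1
      have h2 : ∑ j, (r j - ustar j) ^ 2 = ∑ j, (r j - 1 * ustar j) ^ 2 :=
        Finset.sum_congr rfl fun j _ => by ring
      rw [h2, h]; ring
    rw [hP, Dobj_eq]
    rw [hrse, hru, hAxu] at hrs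
    linarith [hys, hbnd]
  -- conclude
  have hKle : K ≤ 2 * (Pobj A y lam x - Dobj y u) := by linarith
  have hKeq : ∑ j, (ustar j - u j) ^ 2 = K := by
    rw [hKdef]
    exact Finset.sum_congr rfl fun j _ => by simp only [hd]; ring
  have hn2 : norm2 (ustar - u) = Real.sqrt K := by
    rw [norm2, ← hKeq]
    simp [Pi.sub_apply]
  rw [hn2]
  exact Real.sqrt_le_sqrt hKle
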